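/- Let m ≥ 2 and let r₁, …, r_{m−1} be positive reals with r₁ < 1/4 and r_k < r_{k−1}/4 for 2 ≤ k ≤ m−1. For a = (a₁,…,a_{m−1}) ∈ {0,1}^{m−1} define t_a := (1 + Σ_{k=1}^{m−1} (−1)^{a_k} √r_k)². Then t_a < t_{a'} if and only if the binary integer a₁a₂⋯a_{m−1} is strictly greater than the binary integer a'₁a'₂⋯a'_{m−1}. -/

import Mathlib

open Finset

lemma dom_lemma {n : ℕ} (w : Fin n → ℝ) (hw : ∀ k, 0 < w k)
    (hstep : ∀ i j : Fin n, (i : ℕ) + 1 = (j : ℕ) → 2 * w j ≤ w i) :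
    ∀ i : Fin n, ∑ j ∈ univ.filter (fun j => i < j), w j < w i := by
  have H : ∀ d : ℕ, ∀ i : Fin n, n - (i : ℕ) ≤ d + 1 →
      ∑ j ∈ univ.filter (fun j => i < j), w j < w i := by
    intro d
    induction d with
    | zero =>
      intro i hi
      have hlt := i.isLt
      have hempty : univ.filter (fun j => i < j) = ∅ := by
        ext j
        simp only [mem_filter, mem_univ, true_and, Fin.lt_def, notMem_empty, iff_false]
        have := j.isLt
        omega
      rw [hempty]
      simpa using hw i
    | succ d ih =>
      intro i hi
      by_cases hlast : (i : ℕ) + 1 = n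
      · have hempty : univ.filter (fun j => i < j) = ∅ := by
          ext j
          simp only [mem_filter, mem_univ, true_and, Fin.lt_def, notMem_empty, iff_false]
          have := j.isLt
          omega
        rw [hempty]
        simpa using hw i
      · have hlt := i.isLt
        have hj : (i : ℕ) + 1 < n := by omega
        set j : Fin n := ⟨(i : ℕ) + 1, hj⟩ with hjdef
        have hsplit : univ.filter (fun k => i < k) = insert j (univ.filter (fun k => j < k)) := by
          ext k
          simp only [mem_filter, mem_univ, true_and, mem_insert, Fin.lt_def, Fin.ext_iff]
          have hjv : (j : ℕ) = (i : ℕ) + 1 := rfl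
          constructor
          · intro h; omega
          · rintro (h | h) <;> omega
        have hjn : j ∉ univ.filter (fun k => j < k) := by
          simp only [mem_filter, mem_univ, true_and, lt_irrefl, not_false_eq_true]
        rw [hsplit, sum_insert hjn]
        have h1 := ih j (by simp only [hjdef]; omega)
        have h2 := hstep i j rfl
        linarith
  intro i
  exact H (n - (i : ℕ)) i (by omega)

lemma lex_sum_lt {n : ℕ} (w : Fin n → ℝ) (hw : ∀ k, 0 < w k)
    (hdom : ∀ i : Fin n, ∑ j ∈ univ.filter (fun j => i < j), w j < w i)
    (a a' : Fin n → Fin 2) (i : Fin n) (hi : a' i < a i)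
    (hpre : ∀ j, j < i → a j = a' j) :
    ∑ k, ((a' k : ℕ) : ℝ) * w k < ∑ k, ((a k : ℕ) : ℝ) * w k := by
  have hi' : (a' i : ℕ) < (a i : ℕ) := hi
  have hai : (a i : ℕ) = 1 := by have := (a i).isLt; omega
  have hai' : (a' i : ℕ) = 0 := by omega
  set f : Fin n → ℝ := fun k => (((a k : ℕ) : ℝ) - ((a' k : ℕ) : ℝ)) * w k with hf
  have key : (0 : ℝ) < ∑ k, f k := by
    have hsum : ∑ k ∈ univ.erase i, f k + f i = ∑ k, f k :=
      Finset.sum_erase_add _ _ (mem_univ i)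
    have hfi : f i = w i := by simp [hf, hai, hai']
    have hbound : ∑ k ∈ univ.erase i,
        (if i < k then -w k else 0) ≤ ∑ k ∈ univ.erase i, f k := by
      apply Finset.sum_le_sum
      intro k hk
      by_cases h : i < k
      · simp only [h, if_true, hf]
        have h1 : (a' k : ℕ) ≤ 1 := by have := (a' k).isLt; omega
        have h3 : ((a' k : ℕ) : ℝ) ≤ 1 := by exact_mod_cast h1
        have h2 : (0 : ℝ) ≤ ((a k : ℕ) : ℝ) := by positivity
        nlinarith [hw k, (hw k).le]
      · have hk' : k ≠ i := (Finset.mem_erase.mp hk).1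
        have hki : k < i := by
          rcases lt_trichotomy k i with h' | h' | h'
          · exact h'
          · exact absurd h' hk'
          · exact absurd h' h
        have hfk : f k = 0 := by simp [hf, hpre k hki]
        simp [h, hfk]
    have heq : ∑ k ∈ univ.erase i, (if i < k then -w k else 0)
        = -∑ j ∈ univ.filter (fun j => i < j), w j := by
      rw [← Finset.sum_filter]
      have hset : (univ.erase i).filter (fun k => i < k) = univ.filter (fun k => i < k) := by
        ext k
        simp only [mem_filter, mem_erase, mem_univ, true_and, and_true]
        constructor
        · rintro ⟨_, h⟩; exact h
        · intro h; exact ⟨(ne_of_gt h), h⟩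
      rw [hset, Finset.sum_neg_distrib]
    have := hdom i
    rw [← hsum, hfi]
    rw [heq] at hbound
    linarith
  have hdiff : ∑ k, ((a k : ℕ) : ℝ) * w k - ∑ k, ((a' k : ℕ) : ℝ) * w k = ∑ k, f k := by
    rw [← Finset.sum_sub_distrib]
    exact Finset.sum_congr rfl fun k _ => by rw [hf]; ring
  linarith

lemma sum_lt_iff_lex {n : ℕ} (w : Fin n → ℝ) (hw : ∀ k, 0 < w k)
    (hdom : ∀ i : Fin n, ∑ j ∈ univ.filter (fun j => i < j), w j < w i)
    (a a' : Fin n → Fin 2) :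
    (∑ k, ((a' k : ℕ) : ℝ) * w k < ∑ k, ((a k : ℕ) : ℝ) * w k)
      ↔ ∃ i, a' i < a i ∧ ∀ j, j < i → a j = a' j := by
  constructor
  · intro h
    by_contra hn
    push_neg at hn
    rcases eq_or_ne a a' with he | hne
    · rw [he] at h; exact lt_irrefl _ h
    · have hex : ∃ i, a i ≠ a' i := Function.ne_iff.mp hne
      set s : Finset (Fin n) := univ.filter (fun i => a i ≠ a' i) with hs
      have hsne : s.Nonempty := by
        obtain ⟨i, hi⟩ := hex
        exact ⟨i, by simp [hs, hi]⟩
      set i := s.min' hsne with hidef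
      have himem : i ∈ s := s.min'_mem hsne
      have hines : a i ≠ a' i := by
        have := himem; simp [hs] at this; exact this
      have hpre : ∀ j, j < i → a j = a' j := by
        intro j hj
        by_contra hja
        have : i ≤ j := s.min'_le j (by simp [hs, hja])
        exact absurd hj (not_lt.mpr this)
      rcases lt_or_gt_of_ne hines with hlt | hgt
      · -- a i < a' i : get opposite inequality
        have := lex_sum_lt w hw hdom a' a i hlt (fun j hj => (hpre j hj).symm)
        linarith
      · obtain ⟨j, hji, hja⟩ := hn i hgt
        exact hja (hpre j hji)
  · rintro ⟨i, h1, h2⟩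
    exact lex_sum_lt w hw hdom a a' i h1 h2

theorem stmt10 (m : ℕ) (hm : 2 ≤ m) (r : Fin (m - 1) → ℝ)
    (hr : ∀ k, 0 < r k)
    (hr1 : ∀ k : Fin (m - 1), (k : ℕ) = 0 → r k < 1 / 4)
    (hrk : ∀ k j : Fin (m - 1), (j : ℕ) + 1 = (k : ℕ) → r k < r j / 4)
    (a a' : Fin (m - 1) → Fin 2) :
    (1 + ∑ k, (-1 : ℝ) ^ ((a k : ℕ)) * Real.sqrt (r k)) ^ 2
      < (1 + ∑ k, (-1 : ℝ) ^ ((a' k : ℕ)) * Real.sqrt (r k)) ^ 2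
    ↔ (∑ k, (a' k : ℕ) * 2 ^ (m - 2 - (k : ℕ)))
        < (∑ k, (a k : ℕ) * 2 ^ (m - 2 - (k : ℕ))) := by
  have hn1 : 1 ≤ m - 1 := by omega
  -- sqrt weights
  set w : Fin (m-1) → ℝ := fun k => Real.sqrt (r k) with hw
  have hwpos : ∀ k, 0 < w k := fun k => Real.sqrt_pos.mpr (hr k)
  have hwstep : ∀ i j : Fin (m-1), (i : ℕ) + 1 = (j : ℕ) → 2 * w j ≤ w i := by
    intro i j hij
    have hrij : r j < r i / 4 := hrk j i hij
    have h1 : Real.sqrt (r j) ^ 2 = r j := Real.sq_sqrt (hr j).le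
    have h2 : Real.sqrt (r i) ^ 2 = r i := Real.sq_sqrt (hr i).le
    have h3 : 0 ≤ Real.sqrt (r j) := Real.sqrt_nonneg _
    have h4 : 0 ≤ Real.sqrt (r i) := Real.sqrt_nonneg _
    nlinarith [sq_nonneg (2 * Real.sqrt (r j) - Real.sqrt (r i)),
      sq_nonneg (2 * Real.sqrt (r j) + Real.sqrt (r i))]
  have hwdom := dom_lemma w hwpos hwstep
  -- power-of-two weights
  set v : Fin (m-1) → ℝ := fun k => (2 : ℝ) ^ (m - 2 - (k : ℕ)) with hv
  have hvpos : ∀ k, 0 < v k := fun k => by positivity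
  have hvstep : ∀ i j : Fin (m-1), (i : ℕ) + 1 = (j : ℕ) → 2 * v j ≤ v i := by
    intro i j hij
    have hjlt := j.isLt
    have : m - 2 - (i : ℕ) = (m - 2 - (j : ℕ)) + 1 := by omega
    rw [hv]
    simp only
    rw [this, pow_succ]
    ring_nf
    exact le_refl _
  have hvdom := dom_lemma v hvpos hvstep
  -- total sum of sqrt weights < 1
  have hC : ∑ k, w k < 1 := by
    set i0 : Fin (m-1) := ⟨0, by omega⟩ with hi0
    have hsplit : (univ : Finset (Fin (m-1))) = insert i0 (univ.filter (fun k => i0 < k)) := by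
      ext k
      simp only [mem_univ, mem_insert, mem_filter, true_and, true_iff, Fin.lt_def, Fin.ext_iff]
      have hi0v : (i0 : ℕ) = 0 := rfl
      omega
    have hi0n : i0 ∉ univ.filter (fun k => i0 < k) := by simp only [mem_filter, mem_univ, true_and, lt_irrefl, not_false_eq_true]
    have hr0 : w i0 < 1 / 2 := by
      have h0 : r i0 < 1 / 4 := hr1 i0 rfl
      have h1 : Real.sqrt (r i0) ^ 2 = r i0 := Real.sq_sqrt (hr i0).le
      nlinarith [Real.sqrt_nonneg (r i0), sq_nonneg (Real.sqrt (r i0) - 1 / 2)]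
    calc ∑ k, w k = w i0 + ∑ k ∈ univ.filter (fun k => i0 < k), w k := by
          conv_lhs => rw [hsplit]
          rw [sum_insert hi0n]
      _ < w i0 + w i0 := by have := hwdom i0; linarith
      _ < 1 := by linarith
  -- rewrite (-1)^a sums
  have hsignsum : ∀ b : Fin (m-1) → Fin 2,
      ∑ k, (-1 : ℝ) ^ ((b k : ℕ)) * Real.sqrt (r k)
        = ∑ k, w k - 2 * ∑ k, ((b k : ℕ) : ℝ) * w k := by
    intro b
    rw [Finset.mul_sum, ← Finset.sum_sub_distrib]
    apply Finset.sum_congr rfl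
    intro k _
    have hb : (b k : ℕ) = 0 ∨ (b k : ℕ) = 1 := by have := (b k).isLt; omega
    rcases hb with h | h <;> rw [h] <;> push_cast [h] <;> simp [hw] <;> ring
  -- bound for positivity
  have hble : ∀ b : Fin (m-1) → Fin 2, ∑ k, ((b k : ℕ) : ℝ) * w k ≤ ∑ k, w k := by
    intro b
    apply Finset.sum_le_sum
    intro k _
    have h1 : (b k : ℕ) ≤ 1 := by have := (b k).isLt; omega
    have h3 : ((b k : ℕ) : ℝ) ≤ 1 := by exact_mod_cast h1
    nlinarith [(hwpos k).le]
  have hpos : ∀ b : Fin (m-1) → Fin 2,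
      (0 : ℝ) ≤ 1 + ∑ k, (-1 : ℝ) ^ ((b k : ℕ)) * Real.sqrt (r k) := by
    intro b
    rw [hsignsum b]
    have := hble b
    linarith
  rw [pow_lt_pow_iff_left₀ (hpos a) (hpos a') (by norm_num)]
  rw [hsignsum a, hsignsum a']
  have hL : (1 + (∑ k, w k - 2 * ∑ k, ((a k : ℕ) : ℝ) * w k)
      < 1 + (∑ k, w k - 2 * ∑ k, ((a' k : ℕ) : ℝ) * w k))
      ↔ (∑ k, ((a' k : ℕ) : ℝ) * w k < ∑ k, ((a k : ℕ) : ℝ) * w k) := by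
    constructor <;> intro h <;> linarith
  rw [hL, sum_lt_iff_lex w hwpos hwdom a a']
  have hR : (∑ k, (a' k : ℕ) * 2 ^ (m - 2 - (k : ℕ)) < ∑ k, (a k : ℕ) * 2 ^ (m - 2 - (k : ℕ)))
      ↔ (∑ k, ((a' k : ℕ) : ℝ) * v k < ∑ k, ((a k : ℕ) : ℝ) * v k) := by
    rw [← Nat.cast_lt (α := ℝ)]
    push_cast
    rfl
  rw [hR, sum_lt_iff_lex v hvpos hvdom a a']
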